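/- Self-improvement of the pointwise Bakry–Émery bound at the level of symmetric bilinear forms: let $A$ be a symmetric $n\times n$ real matrix (the Hessian $\nabla^2 u$ at a point), $D = \mathrm{tr}(A)$, and $N \ge n$. Then for all vectors $v, w \in \mathbb{R}^n$ with $v, w \ne 0$, $\|A\|_{HS}^2 - \frac{1}{N}D^2 \ge 2\,\frac{\left(v^\top A w - \frac{1}{N} D\, \langle v, w\rangle\right)^2}{|v|^2|w|^2 + \frac{N-2}{N}\langle v,w\rangle^2}$. -/
import Mathlib


open Matrix

/-- Nonnegativity of the quadratic form `Q(M) = ‖M‖² - tr(M)²/N` for `N ≥ n`. -/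
lemma qform_nonneg (n : ℕ) (N : ℝ) (hN : (n : ℝ) ≤ N) (hN0 : 0 < N)
    (M : Matrix (Fin n) (Fin n) ℝ) :
    0 ≤ (∑ i, ∑ j, M i j ^ 2) - (∑ i, M i i) ^ 2 / N := by
  have h1 : (∑ i, M i i) ^ 2 ≤ (n : ℝ) * ∑ i, M i i ^ 2 := by
    simpa using sq_sum_le_card_mul_sum_sq (s := (Finset.univ : Finset (Fin n)))
      (f := fun i => M i i)
  have h2 : (∑ i, M i i ^ 2) ≤ ∑ i, ∑ j, M i j ^ 2 :=
    Finset.sum_le_sum fun i _ =>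
      Finset.single_le_sum (fun j _ => sq_nonneg (M i j)) (Finset.mem_univ i)
  have h3 : 0 ≤ ∑ i, M i i ^ 2 := Finset.sum_nonneg fun i _ => sq_nonneg _
  have h4 : (∑ i, M i i) ^ 2 ≤ N * ∑ i, ∑ j, M i j ^ 2 := by nlinarith
  rw [sub_nonneg, div_le_iff₀ hN0]
  linarith [h4]

/-- self-improvement of the pointwise Bakry–Émery bound,
linear-algebraic form. -/
theorem stmt7 (n : ℕ) (hn : 2 ≤ n) (N : ℝ) (hN : (n : ℝ) ≤ N)
    (A : Matrix (Fin n) (Fin n) ℝ) (hA : A.IsSymm)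
    (v w : Fin n → ℝ) (hv : v ≠ 0) (hw : w ≠ 0) :
    (∑ i, ∑ j, A i j ^ 2) - (1 / N) * A.trace ^ 2 ≥
      2 * (v ⬝ᵥ A.mulVec w - (1 / N) * A.trace * (v ⬝ᵥ w)) ^ 2 /
        ((∑ i, v i ^ 2) * (∑ i, w i ^ 2) + (N - 2) / N * (v ⬝ᵥ w) ^ 2) := by
  have hN0 : (0 : ℝ) < N := lt_of_lt_of_le (by exact_mod_cast Nat.lt_of_lt_of_le two_pos hn) hN
  set p : ℝ := ∑ i, v i ^ 2 with hp
  set q : ℝ := ∑ i, w i ^ 2 with hq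
  set s : ℝ := v ⬝ᵥ w with hs
  set D : ℝ := A.trace with hD
  set E : ℝ := v ⬝ᵥ A.mulVec w with hE
  set F : ℝ := ∑ i, ∑ j, A i j ^ 2 with hF
  have hsdef : s = ∑ i, v i * w i := rfl
  have hDdef : D = ∑ i, A i i := by
    simp [hD, Matrix.trace, Matrix.diag]
  have hEdef : E = ∑ i, ∑ j, A i j * (v i * w j) := by
    simp only [hE, dotProduct, mulVec, Finset.mul_sum]
    exact Finset.sum_congr rfl fun i _ => Finset.sum_congr rfl fun j _ => by ring
  -- symmetry consequence
  have hE2 : (∑ i, ∑ j, A i j * (w i * v j)) = E := by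
    rw [hEdef, Finset.sum_comm]
    exact Finset.sum_congr rfl fun i _ => Finset.sum_congr rfl fun j _ => by
      rw [hA.apply i j]; ring
  have hPQ : (∑ i, ∑ j, (v i * w j) ^ 2) = p * q := by
    rw [hp, hq, Finset.sum_mul_sum]
    exact Finset.sum_congr rfl fun i _ => Finset.sum_congr rfl fun j _ => by ring
  have hQP : (∑ i, ∑ j, (w i * v j) ^ 2) = p * q := by
    rw [hp, hq, mul_comm, Finset.sum_mul_sum]
    exact Finset.sum_congr rfl fun i _ => Finset.sum_congr rfl fun j _ => by ring
  have hSS : (∑ i, ∑ j, (v i * w j) * (w i * v j)) = s ^ 2 := by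
    rw [hsdef, sq, Finset.sum_mul_sum]
    exact Finset.sum_congr rfl fun i _ => Finset.sum_congr rfl fun j _ => by ring
  -- the key quadratic is nonnegative for all t
  have key : ∀ t : ℝ,
      0 ≤ ((p * q + (N - 2) / N * s ^ 2) / 2) * (t * t)
          + (2 * (E - 1 / N * D * s)) * t + (F - 1 / N * D ^ 2) := by
    intro t
    have h := qform_nonneg n N hN hN0
      (fun i j => A i j + t * ((v i * w j + w i * v j) / 2))
    have hsum : (∑ i, ∑ j, (A i j + t * ((v i * w j + w i * v j) / 2)) ^ 2)
        = F + t * (2 * E) + t ^ 2 * ((p * q + s ^ 2) / 2) := by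
      have expand : ∀ i j : Fin n,
          (A i j + t * ((v i * w j + w i * v j) / 2)) ^ 2
            = A i j ^ 2 + t * (A i j * (v i * w j)) + t * (A i j * (w i * v j))
              + t ^ 2 / 4 * ((v i * w j) ^ 2) + t ^ 2 / 2 * ((v i * w j) * (w i * v j))
              + t ^ 2 / 4 * ((w i * v j) ^ 2) := fun i j => by ring
      simp only [expand, Finset.sum_add_distrib, ← Finset.mul_sum]
      rw [← hEdef]
      rw [hE2, hPQ, hQP, hSS]
      ring
    have htr : (∑ i, (A i i + t * ((v i * w i + w i * v i) / 2)))
        = D + t * s := by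
      rw [Finset.sum_add_distrib, ← hDdef]
      congr 1
      rw [hsdef, Finset.mul_sum]
      exact Finset.sum_congr rfl fun i _ => by ring
    rw [hsum, htr] at h
    have heq : ((p * q + (N - 2) / N * s ^ 2) / 2) * (t * t)
          + (2 * (E - 1 / N * D * s)) * t + (F - 1 / N * D ^ 2)
        = F + t * (2 * E) + t ^ 2 * ((p * q + s ^ 2) / 2) - (D + t * s) ^ 2 / N := by
      field_simp
      ring
    rw [heq]
    exact h
  -- discriminant
  have hdisc := discrim_le_zero key
  rw [discrim] at hdisc
  have hpqpos : 0 < p * q := by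
    obtain ⟨i, hi⟩ := Function.ne_iff.mp hv
    obtain ⟨j, hj⟩ := Function.ne_iff.mp hw
    have hp0 : 0 < p := Finset.sum_pos' (fun k _ => sq_nonneg _)
      ⟨i, Finset.mem_univ i, sq_pos_of_ne_zero hi⟩
    have hq0 : 0 < q := Finset.sum_pos' (fun k _ => sq_nonneg _)
      ⟨j, Finset.mem_univ j, sq_pos_of_ne_zero hj⟩
    exact mul_pos hp0 hq0
  have hc : 0 ≤ (N - 2) / N * s ^ 2 := by
    have : (0:ℝ) ≤ N - 2 := by
      have : (2:ℝ) ≤ (n:ℝ) := by exact_mod_cast hn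
      linarith
    positivity
  have hdenpos : 0 < p * q + (N - 2) / N * s ^ 2 := by linarith
  have hkey : 2 * (E - 1 / N * D * s) ^ 2 ≤ (F - 1 / N * D ^ 2) * (p * q + (N - 2) / N * s ^ 2) := by
    nlinarith [hdisc]
  rw [ge_iff_le, div_le_iff₀ hdenpos]
  linarith [hkey]
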